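/- Suppose n ≡ 0 or 1 mod 3 and ν_{n-3} = ν_n - 1. If for every 3-element subset T ⊂ [n] the group ˜H_{ν_{n-3}}(M_{[n]∖T};Z) is an elementary abelian 3-group (or trivial), and the wedge map φ from the direct sum over a ∈ {1,2}, i ∈ [n]∖{1,2} of ˜H_{ν_n - 1}(M_{[n]∖{1,2,i}}) to ˜H_{ν_n}(M_n) (sending z̄ ↦ class of (ai - 12) ∧ z) is surjective, then ˜H_{ν_n}(M_n;Z) has exponent dividing 3, i.e., 3x = 0 for all x ∈ ˜H_{ν_n}(M_n;Z). -/

import Mathlib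

/-!
STATEMENT 16: Suppose n ≡ 0 or 1 mod 3 and ν_{n-3} = ν_n - 1 (ν_n = ⌊(n+1)/3⌋-1).
If for every 3-element subset T ⊆ [n] the group ˜H_{ν_{n-3}}(M_{[n]∖T};ℤ) is an
elementary abelian 3-group (or trivial) — i.e. every cycle of that degree becomes
a boundary after multiplication by 3 — and the wedge map φ (sending a class z̄ of
˜H_{ν_n-1}(M_{[n]∖{1,2,i}}), for a ∈ {1,2} and i ∈ [n]∖{1,2}, to the class of
(ai - 12) ∧ z in ˜H_{ν_n}(M_n)) is surjective, then 3x = 0 for every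
x ∈ ˜H_{ν_n}(M_n;ℤ), i.e. 3·z is a boundary for every ν_n-cycle z.

Chains are modelled on the oriented simplicial chain complex of matching
complexes: vertices are pairs (a,b), a < b (the edge {a,b}); basis elements are
strictly sorted lists of pairwise disjoint edges; ∧ re-sorts concatenations with
the sign of the sorting permutation.
-/

abbrev Vtx : Type := ℕ × ℕ

abbrev Ch : Type := List Vtx →₀ ℤ

def vlt (p q : Vtx) : Prop := p.1 < q.1 ∨ (p.1 = q.1 ∧ p.2 < q.2)

instance : DecidableRel vlt := fun p q => by unfold vlt; infer_instance

def vle (p q : Vtx) : Prop := p = q ∨ vlt p q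

instance : DecidableRel vle := fun p q => by unfold vle; infer_instance

def inversions (l l' : List Vtx) : ℕ :=
  (l.map fun x => l'.countP fun y => decide (vlt y x)).sum

noncomputable def wedge (c d : Ch) : Ch :=
  c.sum fun l m => d.sum fun l' m' =>
    Finsupp.single (List.insertionSort vle (l ++ l')) ((-1 : ℤ) ^ (inversions l l') * m * m')

noncomputable def bd (c : Ch) : Ch :=
  c.sum fun l m => (Finset.range l.length).sum fun i =>
    Finsupp.single (l.eraseIdx i) (m * (-1 : ℤ) ^ i)

/-- faces of the matching complex on vertex set A -/
def IsFaceM (A : Finset ℕ) (l : List Vtx) : Prop :=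
  l.Pairwise vlt ∧ (∀ p ∈ l, p.1 < p.2 ∧ p.1 ∈ A ∧ p.2 ∈ A) ∧
    l.Pairwise fun p q => p.1 ≠ q.1 ∧ p.1 ≠ q.2 ∧ p.2 ≠ q.1 ∧ p.2 ≠ q.2

def IsCycle (A : Finset ℕ) (t : ℕ) (z : Ch) : Prop :=
  (∀ l ∈ z.support, IsFaceM A l ∧ l.length = t + 1) ∧ bd z = 0

def IsBdry (A : Finset ℕ) (t : ℕ) (c : Ch) : Prop :=
  ∃ w : Ch, (∀ l ∈ w.support, IsFaceM A l ∧ l.length = t + 2) ∧ bd w = c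

/-- ν_n = ⌊(n+1)/3⌋ - 1 (as a natural number; nonnegative for n ≥ 2) -/
def nuN (n : ℕ) : ℕ := (n + 1) / 3 - 1

-- ### auxiliary lemmas

lemma bd_zero : bd 0 = 0 := by
  unfold bd; exact Finsupp.sum_zero_index

lemma bd_single (l : List Vtx) (m : ℤ) :
    bd (Finsupp.single l m) =
      ∑ i ∈ Finset.range l.length, Finsupp.single (l.eraseIdx i) (m * (-1 : ℤ) ^ i) := by
  unfold bd
  rw [Finsupp.sum_single_index]
  simp

lemma bd_add (c d : Ch) : bd (c + d) = bd c + bd d := by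
  unfold bd
  apply Finsupp.sum_add_index'
  · intro l; simp
  · intro l b₁ b₂
    rw [← Finset.sum_add_distrib]
    refine Finset.sum_congr rfl fun i _ => ?_
    rw [← Finsupp.single_add]; ring_nf

noncomputable def bdh : Ch →+ Ch := AddMonoidHom.mk' bd bd_add

lemma bd_sub (c d : Ch) : bd (c - d) = bd c - bd d := map_sub bdh c d

lemma bd_zsmul (r : ℤ) (c : Ch) : bd (r • c) = r • bd c := map_zsmul bdh r c

lemma bd_sum {k : ℕ} (f : Fin k → Ch) : bd (∑ j, f j) = ∑ j, bd (f j) := map_sum bdh f Finset.univ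

lemma push_bd (p : Vtx) (w : Ch) :
    bd (Finsupp.mapDomain (p :: ·) w) = w - Finsupp.mapDomain (p :: ·) (bd w) := by
  induction w using Finsupp.induction_linear with
  | zero => simp [bd_zero]
  | add f g hf hg =>
      rw [Finsupp.mapDomain_add, bd_add, hf, hg, bd_add, Finsupp.mapDomain_add]; abel
  | single l m =>
      have hmd : ∀ (s : Finset ℕ) (g : ℕ → Ch),
          Finsupp.mapDomain (p :: ·) (∑ i ∈ s, g i) = ∑ i ∈ s, Finsupp.mapDomain (p :: ·) (g i) :=
        fun s g => map_sum (Finsupp.mapDomain.addMonoidHom (p :: ·)) g s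
      rw [Finsupp.mapDomain_single, bd_single, bd_single, List.length_cons,
        Finset.sum_range_succ', hmd]
      simp only [Finsupp.mapDomain_single,
        List.eraseIdx_cons_succ, List.eraseIdx_cons_zero, pow_succ, pow_zero, mul_one]
      have hneg : ∀ k : ℕ, (Finsupp.single (p :: l.eraseIdx k) (m * ((-1:ℤ)^k * -1)) : Ch)
          = - Finsupp.single (p :: l.eraseIdx k) (m * (-1:ℤ)^k) := fun k => by
        rw [← Finsupp.single_neg]; congr 1; ring
      simp only [hneg]
      rw [Finset.sum_neg_distrib]
      abel

lemma vlt_asymm {p q : Vtx} (h : vlt p q) : ¬ vlt q p := by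
  unfold vlt at *; omega

lemma wedge_single_eq_push (p : Vtx) (z : Ch)
    (hz : ∀ l ∈ z.support, l.Pairwise vlt ∧ ∀ q ∈ l, vlt p q) :
    wedge (Finsupp.single [p] 1) z = Finsupp.mapDomain (p :: ·) z := by
  unfold wedge
  rw [Finsupp.sum_single_index]
  · rw [Finsupp.mapDomain]
    apply Finsupp.sum_congr
    intro l hl
    obtain ⟨hsort, hlt⟩ := hz l hl
    have h1 : inversions [p] l = 0 := by
      unfold inversions
      simp only [List.map_cons, List.map_nil, List.sum_cons, List.sum_nil, add_zero]
      rw [List.countP_eq_zero]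
      intro q hq
      simp only [decide_eq_true_eq]
      exact vlt_asymm (hlt q hq)
    have h2 : List.insertionSort vle ([p] ++ l) = p :: l := by
      apply List.Pairwise.insertionSort_eq
      rw [List.cons_append, List.nil_append, List.pairwise_cons]
      exact ⟨fun q hq => Or.inr (hlt q hq), hsort.imp fun h => Or.inr h⟩
    rw [h1, h2]
    simp
  · simp

lemma wedge_sub_left (c c' d : Ch) : wedge (c - c') d = wedge c d - wedge c' d := by
  unfold wedge
  apply Finsupp.sum_sub_index
  intro l b₁ b₂
  rw [← Finsupp.sum_sub]
  apply Finsupp.sum_congr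
  intro l' _
  rw [← Finsupp.single_sub]
  congr 1
  ring

lemma face_cons {n : ℕ} {T : Finset ℕ} {p : Vtx} {l : List Vtx}
    (hT : ∀ x ∈ Finset.Icc 1 n \ T, 3 ≤ x)
    (hp1 : p.1 < p.2) (hp2 : p.1 ∈ Finset.Icc 1 n) (hp3 : p.2 ∈ Finset.Icc 1 n)
    (hp4 : p.1 ≤ 2) (hp5 : p.2 ∈ T)
    (hl : IsFaceM (Finset.Icc 1 n \ T) l) :
    IsFaceM (Finset.Icc 1 n) (p :: l) := by
  obtain ⟨hs, hmem, hpw⟩ := hl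
  have hq : ∀ q ∈ l, 3 ≤ q.1 ∧ 3 ≤ q.2 ∧ q.1 ∉ T ∧ q.2 ∉ T := by
    intro q hq
    obtain ⟨h1, h2, h3⟩ := hmem q hq
    exact ⟨hT q.1 h2, hT q.2 h3, (Finset.mem_sdiff.mp h2).2, (Finset.mem_sdiff.mp h3).2⟩
  refine ⟨List.pairwise_cons.mpr ⟨?_, hs⟩, ?_, List.pairwise_cons.mpr ⟨?_, hpw⟩⟩
  · intro q hql
    exact Or.inl (by have := (hq q hql).1; omega)
  · intro q hql
    rcases List.mem_cons.mp hql with h | h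
    · subst h; exact ⟨hp1, hp2, hp3⟩
    · obtain ⟨h1, h2, h3⟩ := hmem q h
      exact ⟨h1, (Finset.mem_sdiff.mp h2).1, (Finset.mem_sdiff.mp h3).1⟩
  · intro q hql
    obtain ⟨hq1, hq2, hq3, hq4⟩ := hq q hql
    refine ⟨by omega, by omega, fun h => hq3 (h ▸ hp5), fun h => hq4 (h ▸ hp5)⟩

theorem exponent_three_induction_step (n : ℕ) (h3 : n % 3 = 0 ∨ n % 3 = 1)
    (hnu : nuN (n - 3) + 1 = nuN n)
    -- every ˜H_{ν_{n-3}}(M_{[n]∖T}) is an elementary 3-group (or trivial)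
    (hElem : ∀ T : Finset ℕ, T ⊆ Finset.Icc 1 n → T.card = 3 →
      ∀ z : Ch, IsCycle (Finset.Icc 1 n \ T) (nuN (n - 3)) z →
        IsBdry (Finset.Icc 1 n \ T) (nuN (n - 3)) ((3 : ℤ) • z))
    -- the wedge map φ is surjective
    (hSurj : ∀ Z : Ch, IsCycle (Finset.Icc 1 n) (nuN n) Z →
      ∃ (k : ℕ) (a i : Fin k → ℕ) (z : Fin k → Ch),
        (∀ j, a j ∈ ({1, 2} : Finset ℕ) ∧ i j ∈ Finset.Icc 3 n ∧
          IsCycle (Finset.Icc 1 n \ {1, 2, i j}) (nuN n - 1) (z j)) ∧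
        IsBdry (Finset.Icc 1 n) (nuN n)
          (Z - ∑ j, wedge (Finsupp.single [(a j, i j)] 1 - Finsupp.single [(1, 2)] 1) (z j))) :
    ∀ Z : Ch, IsCycle (Finset.Icc 1 n) (nuN n) Z →
      IsBdry (Finset.Icc 1 n) (nuN n) ((3 : ℤ) • Z) := by
  intro Z hZ
  obtain ⟨k, a, i, z, hz, W, hWsupp, hWbd⟩ := hSurj Z hZ
  have hdeg : nuN n - 1 = nuN (n - 3) := by omega
  -- basic facts per index j
  have hai : ∀ j, (a j = 1 ∨ a j = 2) ∧ 3 ≤ i j ∧ i j ≤ n := by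
    intro j
    obtain ⟨h1, h2, _⟩ := hz j
    simp only [Finset.mem_insert, Finset.mem_singleton] at h1
    rw [Finset.mem_Icc] at h2
    exact ⟨h1, h2⟩
  -- 3 • z j is a boundary
  have key : ∀ j : Fin k, ∃ w : Ch,
      (∀ l ∈ w.support, IsFaceM (Finset.Icc 1 n \ {1, 2, i j}) l ∧
        l.length = nuN (n - 3) + 2) ∧ bd w = (3 : ℤ) • z j := by
    intro j
    obtain ⟨hA, hI, hN⟩ := hai j
    have hTsub : ({1, 2, i j} : Finset ℕ) ⊆ Finset.Icc 1 n := by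
      intro x hx
      simp only [Finset.mem_insert, Finset.mem_singleton] at hx
      rw [Finset.mem_Icc]
      rcases hx with h | h | h <;> omega
    have hTcard : ({1, 2, i j} : Finset ℕ).card = 3 := by
      rw [Finset.card_insert_of_notMem (by simp; omega),
        Finset.card_insert_of_notMem (by simp; omega), Finset.card_singleton]
    exact hElem _ hTsub hTcard (z j) (hdeg ▸ (hz j).2.2)
  choose w hwsupp hwbd using key
  -- support elements of z j and w j lie above both (a j, i j) and (1,2)
  have hvlt : ∀ j (p : Vtx), p.1 ≤ 2 → ∀ (c : Ch),
      (∀ l ∈ c.support, IsFaceM (Finset.Icc 1 n \ {1, 2, i j}) l) →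
      ∀ l ∈ c.support, l.Pairwise vlt ∧ ∀ q ∈ l, vlt p q := by
    intro j p hp c hc l hl
    obtain ⟨hs, hmem, _⟩ := hc l hl
    refine ⟨hs, fun q hq => ?_⟩
    obtain ⟨_, h2, _⟩ := hmem q hq
    rw [Finset.mem_sdiff, Finset.mem_Icc] at h2
    simp only [Finset.mem_insert, Finset.mem_singleton] at h2
    exact Or.inl (by omega)
  set u : Fin k → Ch := fun j =>
    Finsupp.mapDomain ((a j, i j) :: ·) (w j) - Finsupp.mapDomain (((1:ℕ), (2:ℕ)) :: ·) (w j)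
    with hu
  have hSj : ∀ j, wedge (Finsupp.single [(a j, i j)] 1 - Finsupp.single [(1, 2)] 1) (z j)
      = Finsupp.mapDomain ((a j, i j) :: ·) (z j)
        - Finsupp.mapDomain (((1:ℕ), (2:ℕ)) :: ·) (z j) := by
    intro j
    rw [wedge_sub_left,
      wedge_single_eq_push _ _ (hvlt j _ (by have := (hai j).1; simp; omega) _
        (fun l hl => ((hz j).2.2.1 l hl).1)),
      wedge_single_eq_push _ _ (hvlt j _ (by norm_num) _
        (fun l hl => ((hz j).2.2.1 l hl).1))]
  have hbu : ∀ j, bd (u j) =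
      -((3:ℤ) • wedge (Finsupp.single [(a j, i j)] 1 - Finsupp.single [(1, 2)] 1) (z j)) := by
    intro j
    rw [hu]
    simp only
    rw [bd_sub, push_bd, push_bd, hwbd j, hSj j, Finsupp.mapDomain_smul,
      Finsupp.mapDomain_smul, smul_sub]
    abel
  refine ⟨(3 : ℤ) • W - ∑ j, u j, ?_, ?_⟩
  · -- support condition
    intro l hl
    have hl' : l ∈ ((3:ℤ) • W).support ∪ (∑ j, u j).support := Finsupp.support_sub hl
    rcases Finset.mem_union.mp hl' with h | h
    · exact hWsupp l (Finsupp.support_smul h)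
    · have := Finsupp.support_finset_sum h
      rw [Finset.mem_biUnion] at this
      obtain ⟨j, -, hj⟩ := this
      have hj' : l ∈ (Finsupp.mapDomain ((a j, i j) :: ·) (w j)).support
          ∪ (Finsupp.mapDomain (((1:ℕ), (2:ℕ)) :: ·) (w j)).support :=
        Finsupp.support_sub (by rw [hu] at hj; exact hj)
      obtain ⟨hA, hI, hN⟩ := hai j
      have hT3 : ∀ x ∈ Finset.Icc 1 n \ ({1, 2, i j} : Finset ℕ), 3 ≤ x := by
        intro x hx
        rw [Finset.mem_sdiff, Finset.mem_Icc] at hx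
        simp only [Finset.mem_insert, Finset.mem_singleton] at hx
        omega
      rcases Finset.mem_union.mp hj' with h' | h' <;>
        [ (obtain ⟨l', hl2, rfl⟩ := Finset.mem_image.mp (Finsupp.mapDomain_support h');
           obtain ⟨hf, hlen⟩ := hwsupp j l' hl2;
           exact ⟨face_cons hT3 (by simp; omega) (by rw [Finset.mem_Icc]; simp; omega)
             (by rw [Finset.mem_Icc]; simp; omega) (by simp; omega) (by simp) hf,
             by simp [hlen]; omega⟩);
          (obtain ⟨l', hl2, rfl⟩ := Finset.mem_image.mp (Finsupp.mapDomain_support h');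
           obtain ⟨hf, hlen⟩ := hwsupp j l' hl2;
           exact ⟨face_cons hT3 (by norm_num) (by rw [Finset.mem_Icc]; omega)
             (by rw [Finset.mem_Icc]; omega) (by norm_num) (by simp) hf,
             by simp [hlen]; omega⟩)]
  · -- boundary condition
    rw [bd_sub, bd_zsmul, bd_sum, hWbd]
    simp only [hbu]
    rw [Finset.sum_neg_distrib, ← Finset.smul_sum, smul_sub]
    abel
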